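/- arXiv:1704.01520 — 4 statements merged into one kernel-verified Lean document; each statement's English description precedes it below -/
import Mathlib

section
/- Let ω : (0,1] → [0,∞) be a bounded function, κ ∈ (0,1), β ∈ (0,1), and define ω̃(t) = Σ_{i=1}^∞ κ^{iβ} ( ω(κ^{−i}t) if κ^{−i}t ≤ 1, else ω(1) ). If ω is a Dini function (satisfies the doubling-type condition and ∫₀¹ ω(s)/s ds < ∞), then ω̃ is also a Dini function; in particular ∫₀¹ ω̃(s)/s ds < ∞. -/
open MeasureTheory Set ENNReal NNReal Filter

lemma myIntegrableTsum {α : Type*} [MeasurableSpace α] {μ : Measure α} {F : ℕ → α → ℝ}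
    (hF_int : ∀ i, Integrable (F i) μ)
    (hF_sum : Summable fun i => ∫ a, ‖F i a‖ ∂μ) :
    Integrable (fun a => ∑' i, F i a) μ := by
  have hmeas : ∀ i, AEStronglyMeasurable (F i) μ := fun i => (hF_int i).aestronglyMeasurable
  have hf'' : ∀ i, AEMeasurable (fun x => (‖F i x‖₊ : ℝ≥0∞)) μ := fun i => (hmeas i).nnnorm.aemeasurable.coe_nnreal_ennreal
  have hf' : ∑' i, ∫⁻ a, ‖F i a‖₊ ∂μ ≠ ⊤ := by
    have h (i : ℕ) : ∫⁻ (a : α), ‖F i a‖₊ ∂μ = ‖(∫ a : α, ‖F i a‖ ∂μ)‖₊ := by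
      rw [lintegral_coe_eq_integral _ (hF_int i).norm, coe_nnreal_eq, coe_nnnorm,
        Real.norm_of_nonneg (integral_nonneg (fun a => norm_nonneg (F i a)))]
      simp only [coe_nnnorm]
    rw [funext h, ← ENNReal.coe_tsum]
    · exact ENNReal.coe_ne_top
    · simp_rw [← NNReal.summable_coe, coe_nnnorm]
      exact hF_sum.abs
  have hhh : ∀ᵐ a ∂μ, Summable fun n => (‖F n a‖₊ : ℝ) := by
    rw [← lintegral_tsum hf''] at hf'
    refine (ae_lt_top' (AEMeasurable.ennreal_tsum hf'') hf').mono ?_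
    intro x hx
    rw [← ENNReal.tsum_coe_ne_top_iff_summable_coe]
    exact hx.ne
  have hbound_int : Integrable (fun a => ∑' n, (‖F n a‖₊ : ℝ)) μ := by
    refine ⟨?_, ?_⟩
    · simp_rw [← NNReal.coe_tsum]
      rw [aestronglyMeasurable_iff_aemeasurable]
      apply AEMeasurable.coe_nnreal_real
      apply AEMeasurable.nnreal_tsum
      exact fun i => (hmeas i).nnnorm.aemeasurable
    · dsimp [HasFiniteIntegral]
      have : ∫⁻ a, ∑' n, ‖F n a‖₊ ∂μ < ⊤ := by rwa [lintegral_tsum hf'', lt_top_iff_ne_top]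
      convert this using 1
      apply lintegral_congr_ae
      filter_upwards [hhh] with a ha
      have hsum : Summable fun n => ‖F n a‖₊ := NNReal.summable_coe.mp ha
      rw [show (fun n => |F n a|) = (fun n => ((‖F n a‖₊ : ℝ≥0) : ℝ)) from
        funext fun n => by rw [coe_nnnorm, Real.norm_eq_abs]]
      rw [← NNReal.coe_tsum, NNReal.enorm_eq]
      exact ENNReal.coe_tsum hsum
  have hlim : ∀ᵐ a ∂μ, Tendsto (fun N => ∑ i ∈ Finset.range N, F i a) atTop
      (nhds (∑' i, F i a)) := by
    filter_upwards [hhh] with a ha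
    have hs : Summable fun n => F n a := by
      apply Summable.of_norm
      simpa only [coe_nnnorm] using ha
    exact hs.hasSum.tendsto_sum_nat
  have haesm : AEStronglyMeasurable (fun a => ∑' i, F i a) μ :=
    aestronglyMeasurable_of_tendsto_ae atTop
      (fun N => (Finset.range N).aestronglyMeasurable_sum (fun i _ => hmeas i)) (by simpa only [Finset.sum_apply] using hlim)
  refine hbound_int.mono' haesm ?_
  filter_upwards [hhh] with a ha
  have ha' : Summable fun n => ‖F n a‖ := by simpa only [coe_nnnorm] using ha
  calc ‖∑' i, F i a‖ ≤ ∑' n, ‖F n a‖ := norm_tsum_le_tsum_norm ha'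
    _ = ∑' n, (‖F n a‖₊ : ℝ) := by simp_rw [coe_nnnorm]

lemma scaleAux {h : ℝ → ℝ} {a : ℝ} (ha : 0 < a) (hI : IntegrableOn h (Ioo 0 1)) :
    IntegrableOn (fun x => h (x / a)) (Ioo 0 a) ∧
      ∫ x in Ioo 0 a, h (x / a) = a * ∫ x in Ioo 0 1, h x := by
  have hEq : (fun x => (Ioo (0:ℝ) 1).indicator h (a⁻¹ * x))
      = (Ioo 0 a).indicator (fun y => h (y / a)) := by
    funext x
    have h1 : (fun x : ℝ => a⁻¹ * x) ⁻¹' Ioo 0 1 = Ioo 0 a := by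
      rw [preimage_const_mul_Ioo₀ _ _ (inv_pos.2 ha)]
      norm_num
    have := Set.indicator_comp_right (s := Ioo (0:ℝ) 1) (fun x : ℝ => a⁻¹ * x) (g := h) (x := x)
    rw [h1] at this
    rw [← this]
    congr 1
    funext y
    simp [Function.comp, div_eq_inv_mul]
  have hsub1 : Ioo (0:ℝ) a ⊆ Ioi 0 := fun x hx => hx.1
  have hsub2 : Ioo (0:ℝ) 1 ⊆ Ioi 0 := fun x hx => hx.1
  have hH : Integrable ((Ioo (0:ℝ) 1).indicator h) := (integrable_indicator_iff measurableSet_Ioo).2 hI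
  constructor
  · have h1 : IntegrableOn (fun x => (Ioo (0:ℝ) 1).indicator h (a⁻¹ * x)) (Ioi 0) := by
      rw [integrableOn_Ioi_comp_mul_left_iff _ _ (inv_pos.2 ha)]
      exact hH.integrableOn
    rw [hEq] at h1
    have h2 : Integrable ((Ioo 0 a).indicator (fun y => h (y / a))) := by
      have h3 := (integrable_indicator_iff measurableSet_Ioi).2 h1
      rwa [Set.indicator_indicator, Set.inter_eq_self_of_subset_right
        hsub1] at h3
    exact (integrable_indicator_iff measurableSet_Ioo).1 h2
  · have hval := integral_comp_mul_left_Ioi ((Ioo (0:ℝ) 1).indicator h) 0 (inv_pos.2 ha)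
    rw [hEq] at hval
    rw [mul_zero, inv_inv] at hval
    rw [setIntegral_indicator measurableSet_Ioo,
      Set.inter_eq_self_of_subset_right hsub1] at hval
    rw [setIntegral_indicator measurableSet_Ioo,
      Set.inter_eq_self_of_subset_right hsub2] at hval
    rw [hval, smul_eq_mul]

noncomputable def gA (ω : ℝ → ℝ) (κ : ℝ) (i : ℕ) (t : ℝ) : ℝ :=
  if t / κ ^ (i + 1) ≤ 1 then ω (t / κ ^ (i + 1)) else ω 1

/-- `ω` is a Dini function on `(0, 1]`. -/
def IsDini (ω : ℝ → ℝ) : Prop :=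
  (∀ t ∈ Set.Ioc (0:ℝ) 1, 0 ≤ ω t) ∧
  (∃ c₁ c₂ : ℝ, 0 < c₁ ∧ 0 < c₂ ∧ ∀ t s : ℝ, 0 < t → t ≤ 1 → t / 2 ≤ s → s ≤ t →
    c₁ * ω t ≤ ω s ∧ ω s ≤ c₂ * ω t) ∧
  ∀ t ∈ Set.Ioc (0:ℝ) 1, IntegrableOn (fun s => ω s / s) (Set.Ioo 0 t)

theorem stmt3 (ω : ℝ → ℝ) (B : ℝ) (hbdd : ∀ t ∈ Set.Ioc (0:ℝ) 1, |ω t| ≤ B)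
    (hω : IsDini ω) (κ β : ℝ) (hκ : κ ∈ Set.Ioo (0:ℝ) 1) (hβ : β ∈ Set.Ioo (0:ℝ) 1)
    (ωt : ℝ → ℝ)
    (hωt : ∀ t ∈ Set.Ioc (0:ℝ) 1, ωt t =
      ∑' i : ℕ, κ ^ (((i : ℝ) + 1) * β) *
        (if t / κ ^ (i + 1) ≤ 1 then ω (t / κ ^ (i + 1)) else ω 1)) :
    IsDini ωt ∧ IntegrableOn (fun s => ωt s / s) (Set.Ioo 0 1) := by
  obtain ⟨hκ0, hκ1⟩ := hκ
  obtain ⟨hβ0, hβ1⟩ := hβ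
  obtain ⟨hnn, ⟨c₁, c₂, hc₁, hc₂, hdoub⟩, hint⟩ := hω
  have hr0 : (0:ℝ) < κ ^ β := Real.rpow_pos_of_pos hκ0 β
  have hr1 : κ ^ β < 1 := Real.rpow_lt_one hκ0.le hκ1 hβ0
  have hc : ∀ i : ℕ, κ ^ (((i:ℝ)+1)*β) = (κ ^ β) ^ (i+1) := by
    intro i
    rw [show ((i:ℝ)+1)*β = β * ((i+1 : ℕ) : ℝ) by push_cast; ring,
        Real.rpow_mul hκ0.le, Real.rpow_natCast]
  have hcnn : ∀ i : ℕ, 0 ≤ κ ^ (((i:ℝ)+1)*β) := fun i => Real.rpow_nonneg hκ0.le _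
  have ha0 : ∀ i : ℕ, 0 < κ ^ (i+1) := fun i => pow_pos hκ0 _
  have hω1 : 0 ≤ ω 1 := hnn 1 ⟨one_pos, le_rfl⟩
  have hgnn : ∀ (i : ℕ) (t : ℝ), 0 < t → 0 ≤ gA ω κ i t := by
    intro i t ht
    unfold gA
    split
    · exact hnn _ ⟨div_pos ht (ha0 i), ‹_›⟩
    · exact hω1
  have hgB : ∀ (i : ℕ) (t : ℝ), 0 < t → |gA ω κ i t| ≤ B := by
    intro i t ht
    unfold gA
    split
    · exact hbdd _ ⟨div_pos ht (ha0 i), ‹_›⟩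
    · exact hbdd 1 ⟨one_pos, le_rfl⟩
  have hgeo : Summable fun i : ℕ => (κ ^ β) ^ (i+1) :=
    (_root_.summable_nat_add_iff 1).2 (summable_geometric_of_lt_one hr0.le hr1)
  have hsumm : ∀ t : ℝ, 0 < t → Summable (fun i : ℕ => κ ^ (((i:ℝ)+1)*β) * gA ω κ i t) := by
    intro t ht
    apply Summable.of_norm_bounded (hgeo.mul_right B)
    intro i
    rw [Real.norm_eq_abs, abs_mul, abs_of_nonneg (hcnn i), hc i]
    exact mul_le_mul_of_nonneg_left (hgB i t ht) (pow_nonneg hr0.le _)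
  have hωt' : ∀ t ∈ Set.Ioc (0:ℝ) 1, ωt t = ∑' i : ℕ, κ ^ (((i:ℝ)+1)*β) * gA ω κ i t := by
    intro t ht; rw [hωt t ht]; rfl
  have key : ∀ (i : ℕ) (t s : ℝ), 0 < t → t ≤ 1 → t / 2 ≤ s → s ≤ t →
      c₁ * gA ω κ i t ≤ gA ω κ i s ∧ gA ω κ i s ≤ c₂ * gA ω κ i t := by
    intro i t s ht0 ht1 hts hst
    have ha := ha0 i
    have hs0 : 0 < s := lt_of_lt_of_le (by linarith) hts
    by_cases h1 : t / κ ^ (i+1) ≤ 1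
    · have hmono : s / κ ^ (i+1) ≤ t / κ ^ (i+1) := by gcongr
      have hhalf : t / κ ^ (i+1) / 2 ≤ s / κ ^ (i+1) := by
        rw [div_right_comm]; gcongr
      simp only [gA]
      rw [if_pos h1, if_pos (hmono.trans h1)]
      exact hdoub _ _ (div_pos ht0 ha) h1 hhalf hmono
    · push_neg at h1
      by_cases h2 : s / κ ^ (i+1) ≤ 1
      · simp only [gA]
        rw [if_neg (not_le.2 h1), if_pos h2]
        refine hdoub 1 _ one_pos le_rfl ?_ h2
        have hhalf : t / κ ^ (i+1) / 2 ≤ s / κ ^ (i+1) := by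
          rw [div_right_comm]; gcongr
        linarith
      · simp only [gA]
        rw [if_neg (not_le.2 h1), if_neg h2]
        exact hdoub 1 1 one_pos le_rfl (by norm_num) le_rfl
  have comp1 : ∀ t ∈ Set.Ioc (0:ℝ) 1, 0 ≤ ωt t := by
    intro t ht; rw [hωt' t ht]
    exact tsum_nonneg fun i => mul_nonneg (hcnn i) (hgnn i t ht.1)
  have comp2 : ∀ t s : ℝ, 0 < t → t ≤ 1 → t/2 ≤ s → s ≤ t →
      c₁ * ωt t ≤ ωt s ∧ ωt s ≤ c₂ * ωt t := by
    intro t s ht0 ht1 hts hst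
    have hs0 : 0 < s := lt_of_lt_of_le (by linarith) hts
    have hs1 : s ≤ 1 := hst.trans ht1
    rw [hωt' t ⟨ht0, ht1⟩, hωt' s ⟨hs0, hs1⟩]
    constructor
    · rw [← _root_.tsum_mul_left]
      apply Summable.tsum_le_tsum _ ((hsumm t ht0).mul_left c₁) (hsumm s hs0)
      intro i
      rw [← mul_assoc, mul_comm c₁, mul_assoc]
      exact mul_le_mul_of_nonneg_left (key i t s ht0 ht1 hts hst).1 (hcnn i)
    · rw [← _root_.tsum_mul_left]
      apply Summable.tsum_le_tsum _ (hsumm s hs0) ((hsumm t ht0).mul_left c₂)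
      intro i
      rw [← mul_assoc, mul_comm c₂, mul_assoc]
      exact mul_le_mul_of_nonneg_left (key i t s ht0 ht1 hts hst).2 (hcnn i)
  -- integrability
  have hI : IntegrableOn (fun u => ω u / u) (Ioo 0 1) := hint 1 ⟨one_pos, le_rfl⟩
  have piece : ∀ i : ℕ, IntegrableOn (fun s => gA ω κ i s / s) (Ioo 0 1) ∧
      ∫ s in Ioo 0 1, gA ω κ i s / s
        = (∫ u in Ioo 0 1, ω u / u) + ω 1 * (((i:ℝ)+1) * Real.log (1/κ)) := by
    intro i
    have haa : 0 < κ ^ (i+1) := ha0 i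
    have ha1 : κ ^ (i+1) < 1 := pow_lt_one₀ hκ0.le hκ1 (Nat.succ_ne_zero i)
    have e1 : EqOn (fun s => gA ω κ i s / s) (fun s => ω (s / κ ^ (i+1)) / s)
        (Ioo 0 (κ ^ (i+1))) := by
      intro x hx
      simp only [gA]
      rw [if_pos ((div_le_one haa).2 hx.2.le)]
    have e2 : EqOn (fun s => gA ω κ i s / s) (fun s => ω 1 / s) (Ico (κ ^ (i+1)) 1) := by
      intro x hx
      simp only [gA]
      by_cases hxa : x / κ ^ (i+1) ≤ 1
      · have hxa' : x = κ ^ (i+1) := le_antisymm ((div_le_one haa).1 hxa) hx.1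
        rw [if_pos hxa, hxa', div_self haa.ne']
      · rw [if_neg hxa]
    have hsc := scaleAux (h := fun u => ω u / u) haa hI
    have e3 : EqOn (fun x => (κ ^ (i+1))⁻¹ * ((fun u => ω u / u) (x / κ ^ (i+1))))
        (fun x => ω (x / κ ^ (i+1)) / x) (Ioo 0 (κ ^ (i+1))) := by
      intro x hx
      have hx0 : x ≠ 0 := ne_of_gt hx.1
      simp only
      rw [div_div_eq_mul_div]
      field_simp
    have int1 : IntegrableOn (fun s => ω (s / κ ^ (i+1)) / s) (Ioo 0 (κ ^ (i+1))) :=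
      MeasureTheory.IntegrableOn.congr_fun (hsc.1.const_mul (κ ^ (i+1))⁻¹) e3 measurableSet_Ioo
    have val1 : ∫ s in Ioo 0 (κ ^ (i+1)), ω (s / κ ^ (i+1)) / s = ∫ u in Ioo 0 1, ω u / u := by
      rw [← setIntegral_congr_fun measurableSet_Ioo e3, integral_const_mul, hsc.2,
        ← mul_assoc, inv_mul_cancel₀ haa.ne', one_mul]
    have int2 : IntegrableOn (fun s => ω 1 / s) (Ico (κ ^ (i+1)) 1) := by
      apply (ContinuousOn.integrableOn_compact isCompact_Icc ?_).mono_set Ico_subset_Icc_self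
      exact continuousOn_const.div continuousOn_id
        (fun x hx => ne_of_gt (lt_of_lt_of_le haa hx.1))
    have val2 : ∫ s in Ico (κ ^ (i+1)) 1, ω 1 / s
        = ω 1 * (((i:ℝ)+1) * Real.log (1/κ)) := by
      simp_rw [div_eq_mul_inv]
      rw [integral_const_mul]
      congr 1
      rw [integral_Ico_eq_integral_Ioo, ← integral_Ioc_eq_integral_Ioo,
          ← intervalIntegral.integral_of_le ha1.le, integral_inv_of_pos haa one_pos,
          show (1:ℝ) / κ ^ (i+1) = (1/κ) ^ (i+1) by rw [one_div, one_div, inv_pow],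
          Real.log_pow]
      push_cast
      ring
    have disj : Disjoint (Ioo (0:ℝ) (κ ^ (i+1))) (Ico (κ ^ (i+1)) 1) :=
      Set.disjoint_left.mpr fun x hx hx' => absurd hx.2 (not_lt.2 hx'.1)
    have intA : IntegrableOn (fun s => gA ω κ i s / s) (Ioo 0 (κ ^ (i+1))) :=
      int1.congr_fun e1.symm measurableSet_Ioo
    have intB : IntegrableOn (fun s => gA ω κ i s / s) (Ico (κ ^ (i+1)) 1) :=
      int2.congr_fun e2.symm measurableSet_Ico
    constructor
    · rw [← Set.Ioo_union_Ico_eq_Ioo haa ha1.le]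
      exact intA.union intB
    · rw [← Set.Ioo_union_Ico_eq_Ioo haa ha1.le,
        setIntegral_union disj measurableSet_Ico intA intB,
        setIntegral_congr_fun measurableSet_Ioo e1, setIntegral_congr_fun measurableSet_Ico e2,
        val1, val2, Set.Ioo_union_Ico_eq_Ioo haa ha1.le]
  have hFint : ∀ i : ℕ, Integrable (fun s => κ ^ (((i:ℝ)+1)*β) * (gA ω κ i s / s))
      (volume.restrict (Ioo 0 1)) := fun i => ((piece i).1).const_mul _
  have hFnorm : ∀ i : ℕ, ∫ s in Ioo (0:ℝ) 1, ‖κ ^ (((i:ℝ)+1)*β) * (gA ω κ i s / s)‖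
      = (κ ^ β) ^ (i+1) * ((∫ u in Ioo 0 1, ω u / u) + ω 1 * (((i:ℝ)+1) * Real.log (1/κ))) := by
    intro i
    rw [setIntegral_congr_fun measurableSet_Ioo
      (g := fun s => κ ^ (((i:ℝ)+1)*β) * (gA ω κ i s / s)) (fun x hx => Real.norm_of_nonneg
        (mul_nonneg (hcnn i) (div_nonneg (hgnn i x hx.1) hx.1.le))),
      integral_const_mul, (piece i).2, hc i]
  have hgeo1 : Summable fun i : ℕ => ((i:ℝ)+1) * (κ ^ β) ^ (i+1) := by
    have h := summable_pow_mul_geometric_of_norm_lt_one (R := ℝ) 1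
      (by rw [Real.norm_eq_abs, abs_of_pos hr0]; exact hr1)
    exact ((_root_.summable_nat_add_iff 1).2 h).congr fun i => by push_cast; ring
  have hFsum : Summable fun i : ℕ =>
      ∫ s in Ioo (0:ℝ) 1, ‖κ ^ (((i:ℝ)+1)*β) * (gA ω κ i s / s)‖ := by
    have hs : Summable fun i : ℕ => (κ ^ β) ^ (i+1) * (∫ u in Ioo (0:ℝ) 1, ω u / u)
        + (ω 1 * Real.log (1/κ)) * (((i:ℝ)+1) * (κ ^ β) ^ (i+1)) :=
      (hgeo.mul_right _).add (hgeo1.mul_left _)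
    exact hs.congr fun i => by rw [hFnorm i]; ring
  have main : IntegrableOn (fun s => ωt s / s) (Ioo 0 1) := by
    have hts := myIntegrableTsum hFint hFsum
    apply MeasureTheory.IntegrableOn.congr_fun hts ?_ measurableSet_Ioo
    intro x hx
    simp only
    rw [hωt' x ⟨hx.1, hx.2.le⟩, ← tsum_div_const]
    exact tsum_congr fun i => (mul_div_assoc _ _ _).symm
  exact ⟨⟨comp1, ⟨c₁, c₂, hc₁, hc₂, comp2⟩,
    fun t ht => main.mono_set (Ioo_subset_Ioo_right ht.2)⟩, main⟩
end

section
/- Let ω̃ : (0,1] → [0,∞) be a Dini function and β ∈ (0,1). Define ω♯(t) = sup over s ∈ [t,1] of (t/s)^β ω̃(s) for 0 < t ≤ 1. Then ω♯(t) ≤ C Σ_{j=0}^∞ 2^{−jβ} ( ω̃(2^j t) if 2^j t ≤ 1, else ω̃(1) ), where C depends only on the doubling constants of ω̃; consequently ω♯ is again a Dini function. -/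
open MeasureTheory Set
open scoped ENNReal

namespace Stmt4Aux

set_option linter.unusedSectionVars false

noncomputable def F (β : ℝ) (ωt : ℝ → ℝ) (t : ℝ) (j : ℕ) : ℝ :=
  (2:ℝ) ^ (-(j:ℝ) * β) * (if (2:ℝ) ^ j * t ≤ 1 then ωt ((2:ℝ) ^ j * t) else ωt 1)

noncomputable def Om (β : ℝ) (ωt : ℝ → ℝ) (t : ℝ) : ℝ :=
  sSup {v : ℝ | ∃ s ∈ Set.Icc t 1, v = (t / s) ^ β * ωt s}

variable {β c₁ c₂ t u a b t₀ : ℝ} {ωt : ℝ → ℝ} {j : ℕ}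

lemma rpow_geom (β : ℝ) (j : ℕ) : (2:ℝ) ^ (-(j:ℝ) * β) = ((2:ℝ) ^ (-β)) ^ j := by
  rw [← Real.rpow_natCast ((2:ℝ) ^ (-β)) j, ← Real.rpow_mul (by norm_num)]
  ring_nf

lemma geom_pos (β : ℝ) : 0 < (2:ℝ) ^ (-β) := Real.rpow_pos_of_pos (by norm_num) _

lemma geom_lt_one (hβ : 0 < β) : (2:ℝ) ^ (-β) < 1 := by
  rw [Real.rpow_neg (by norm_num), inv_lt_one_iff₀]
  right
  exact Real.one_lt_rpow_iff_of_pos (by norm_num) |>.2 (Or.inl ⟨by norm_num, hβ⟩)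

lemma F_nonneg (hω₀ : ∀ u ∈ Ioc (0:ℝ) 1, 0 ≤ ωt u) (ht : t ∈ Ioc (0:ℝ) 1) (j : ℕ) :
    0 ≤ F β ωt t j := by
  have h2 : (0:ℝ) < 2 ^ j * t := mul_pos (by positivity) ht.1
  refine mul_nonneg (Real.rpow_nonneg (by norm_num) _) ?_
  split_ifs with h
  · exact hω₀ _ ⟨h2, h⟩
  · exact hω₀ 1 ⟨one_pos, le_refl 1⟩

lemma summable_F (hβ : 0 < β) (ht : t ∈ Ioc (0:ℝ) 1) : Summable (F β ωt t) := by
  obtain ⟨N, hN⟩ := pow_unbounded_of_one_lt (1 / t) (by norm_num : (1:ℝ) < 2)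
  rw [← summable_nat_add_iff N]
  have key : ∀ j : ℕ, F β ωt t (j + N) = (((2:ℝ) ^ (-β)) ^ N * ωt 1) * ((2:ℝ) ^ (-β)) ^ j := by
    intro j
    have h1 : (1:ℝ) < 2 ^ (j + N) * t := by
      have : (2:ℝ) ^ N ≤ 2 ^ (j + N) := pow_le_pow_right₀ (by norm_num) (by omega)
      calc (1:ℝ) = (1 / t) * t := by rw [one_div, inv_mul_cancel₀ ht.1.ne']
        _ < 2 ^ N * t := by exact mul_lt_mul_of_pos_right hN ht.1
        _ ≤ 2 ^ (j + N) * t := mul_le_mul_of_nonneg_right this ht.1.le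
    rw [F, if_neg (not_le.2 h1), rpow_geom, pow_add]
    ring
  rw [funext key]
  exact (summable_geometric_of_lt_one (Stmt4Aux.geom_pos β).le (geom_lt_one hβ)).mul_left _

lemma inv_pow_rpow (j : ℕ) (β : ℝ) : (((2:ℝ)^j)⁻¹) ^ β = (2:ℝ) ^ (-(j:ℝ)*β) := by
  rw [show ((2:ℝ)^j)⁻¹ = (2:ℝ)^(-(j:ℝ)) by
      rw [← Real.rpow_natCast (2:ℝ) j, ← Real.rpow_neg (by norm_num)],
    ← Real.rpow_mul (by norm_num)]

lemma elt_bound (hβ : β ∈ Ioo (0:ℝ) 1) (hc₁ : 0 < c₁) (hc₂ : 0 < c₂)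
    (hω₀ : ∀ u ∈ Ioc (0:ℝ) 1, 0 ≤ ωt u)
    (hdbl : ∀ a b : ℝ, 0 < a → a ≤ 1 → a / 2 ≤ b → b ≤ a → c₁ * ωt a ≤ ωt b ∧ ωt b ≤ c₂ * ωt a)
    (ht : t ∈ Ioc (0:ℝ) 1) (hu : u ∈ Icc t 1) :
    (t/u)^β * ωt u ≤ (2*c₂*(1+1/c₁)) * ∑' j, F β ωt t j := by
  set C := 2*c₂*(1+1/c₁) with hCdef
  have hC : 0 < C := by positivity
  have hu0 : 0 < u := lt_of_lt_of_le ht.1 hu.1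
  have hu1 : u ≤ 1 := hu.2
  have hωu : 0 ≤ ωt u := hω₀ u ⟨hu0, hu1⟩
  have key : ∀ j : ℕ, (t/u)^β * ωt u ≤ C * F β ωt t j →
      (t/u)^β * ωt u ≤ C * ∑' k, F β ωt t k := fun j h =>
    h.trans (mul_le_mul_of_nonneg_left
      (Summable.le_tsum (summable_F hβ.1 ht) j (fun k _ => F_nonneg hω₀ ht k)) hC.le)
  have hfind : ∃ n : ℕ, u ≤ 2^n * t := by
    obtain ⟨n, hn⟩ := pow_unbounded_of_one_lt (u / t) (by norm_num : (1:ℝ) < 2)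
    exact ⟨n, by rw [div_lt_iff₀ ht.1] at hn; linarith⟩
  set j' := Nat.find hfind with hj'
  have hspec : u ≤ 2^j' * t := Nat.find_spec hfind
  match hj'' : j' with
  | 0 =>
    have hut : u = t := le_antisymm (by simpa using hspec) hu.1
    apply key 0
    have hF0 : F β ωt t 0 = ωt t := by
      simp [F, ht.2, ht.1]
    rw [hF0, hut, div_self ht.1.ne', Real.one_rpow, one_mul]
    have h1 : ωt t ≤ c₂ * ωt t := (hdbl t t ht.1 ht.2 (by linarith [ht.1]) le_rfl).2
    have h2 : c₂ * ωt t ≤ C * ωt t := by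
      apply mul_le_mul_of_nonneg_right _ (hω₀ t ht)
      rw [hCdef]; nlinarith [mul_pos hc₂ (one_div_pos.2 hc₁)]
    linarith
  | j + 1 =>
    have h₁ : u ≤ 2^(j+1) * t := hspec
    have h₂ : (2:ℝ)^j * t < u := by
      have := Nat.find_min hfind (m := j) (by omega)
      linarith [not_le.1 this]
    have hpos : (0:ℝ) < 2^j * t := mul_pos (by positivity) ht.1
    have hpow : ((2:ℝ)^(j+1)) * t = 2 * (2^j * t) := by ring
    have hp : (t/u)^β ≤ (2:ℝ) ^ (-(j:ℝ)*β) := by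
      rw [← inv_pow_rpow j β]
      apply Real.rpow_le_rpow (div_nonneg ht.1.le hu0.le) _ hβ.1.le
      rw [div_le_iff₀ hu0, inv_mul_eq_div, le_div_iff₀ (by positivity : (0:ℝ) < 2^j)]
      calc t * 2^j = 2^j * t := by ring
        _ ≤ u := h₂.le
    have hv : (t/u)^β * ωt u ≤ (2:ℝ)^(-(j:ℝ)*β) * ωt u :=
      mul_le_mul_of_nonneg_right hp hωu
    by_cases h1 : (2:ℝ)^(j+1) * t ≤ 1
    · -- case A
      apply key (j+1)
      have hd : ωt u ≤ c₂ * ωt (2^(j+1)*t) := by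
        refine (hdbl (2^(j+1)*t) u (mul_pos (by positivity) ht.1) h1 ?_ h₁).2
        rw [hpow]; linarith
      have hF : F β ωt t (j+1) = (2:ℝ)^(-((j:ℝ)+1)*β) * ωt (2^(j+1)*t) := by
        rw [F, if_pos h1]; norm_num
      have hsplit : (2:ℝ)^(-(j:ℝ)*β) = 2^β * (2:ℝ)^(-((j:ℝ)+1)*β) := by
        rw [← Real.rpow_add (by norm_num)]; ring_nf
      have h2β : (2:ℝ)^β ≤ 2 := by
        calc (2:ℝ)^β ≤ (2:ℝ)^(1:ℝ) :=
          Real.rpow_le_rpow_of_exponent_le one_le_two hβ.2.le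
        _ = 2 := Real.rpow_one 2
      have hωp : 0 ≤ ωt (2^(j+1)*t) := hω₀ _ ⟨mul_pos (by positivity) ht.1, h1⟩
      have hrp : (0:ℝ) ≤ (2:ℝ)^(-((j:ℝ)+1)*β) := Real.rpow_nonneg (by norm_num) _
      calc (t/u)^β * ωt u ≤ (2:ℝ)^(-(j:ℝ)*β) * (c₂ * ωt (2^(j+1)*t)) := by
            refine hv.trans (mul_le_mul_of_nonneg_left hd (Real.rpow_nonneg (by norm_num) _))
        _ = (c₂ * 2^β) * ((2:ℝ)^(-((j:ℝ)+1)*β) * ωt (2^(j+1)*t)) := by rw [hsplit]; ring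
        _ ≤ C * F β ωt t (j+1) := by
            rw [hF]
            apply mul_le_mul_of_nonneg_right _ (mul_nonneg hrp hωp)
            rw [hCdef]; nlinarith [mul_pos hc₂ (one_div_pos.2 hc₁)]
    · -- case B
      push_neg at h1
      have hhalf : (1:ℝ)/2 < 2^j * t := by rw [hpow] at h1; linarith
      have hωu1 : ωt u ≤ c₂ * ωt 1 :=
        (hdbl 1 u one_pos le_rfl (by linarith) hu1).2
      have hω1 : 0 ≤ ωt 1 := hω₀ 1 ⟨one_pos, le_rfl⟩
      have hrpj : (0:ℝ) ≤ (2:ℝ)^(-(j:ℝ)*β) := Real.rpow_nonneg (by norm_num) _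
      by_cases h2 : (2:ℝ)^j * t ≤ 1
      · apply key j
        have hlow : c₁ * ωt 1 ≤ ωt (2^j*t) :=
          (hdbl 1 (2^j*t) one_pos le_rfl (by linarith) h2).1
        have hF : F β ωt t j = (2:ℝ)^(-(j:ℝ)*β) * ωt (2^j*t) := by rw [F, if_pos h2]
        have hωp : 0 ≤ ωt (2^j*t) := hω₀ _ ⟨hpos, h2⟩
        have : ωt u ≤ (c₂/c₁) * ωt (2^j*t) := by
          rw [div_mul_eq_mul_div, le_div_iff₀ hc₁]
          calc ωt u * c₁ ≤ (c₂ * ωt 1) * c₁ := mul_le_mul_of_nonneg_right hωu1 hc₁.le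
            _ = c₂ * (c₁ * ωt 1) := by ring
            _ ≤ c₂ * ωt (2^j*t) := mul_le_mul_of_nonneg_left hlow hc₂.le
        calc (t/u)^β * ωt u ≤ (2:ℝ)^(-(j:ℝ)*β) * ((c₂/c₁) * ωt (2^j*t)) :=
              hv.trans (mul_le_mul_of_nonneg_left this hrpj)
          _ = (c₂/c₁) * ((2:ℝ)^(-(j:ℝ)*β) * ωt (2^j*t)) := by ring
          _ ≤ C * F β ωt t j := by
              rw [hF]
              apply mul_le_mul_of_nonneg_right _ (mul_nonneg hrpj hωp)
              rw [hCdef, div_eq_mul_inv, ← one_div]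
              nlinarith [mul_pos hc₂ (one_div_pos.2 hc₁)]
      · apply key j
        have hF : F β ωt t j = (2:ℝ)^(-(j:ℝ)*β) * ωt 1 := by rw [F, if_neg h2]
        calc (t/u)^β * ωt u ≤ (2:ℝ)^(-(j:ℝ)*β) * (c₂ * ωt 1) :=
              hv.trans (mul_le_mul_of_nonneg_left hωu1 hrpj)
          _ = c₂ * ((2:ℝ)^(-(j:ℝ)*β) * ωt 1) := by ring
          _ ≤ C * F β ωt t j := by
              rw [hF]
              apply mul_le_mul_of_nonneg_right _ (mul_nonneg hrpj hω1)
              rw [hCdef]; nlinarith [mul_pos hc₂ (one_div_pos.2 hc₁)]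

lemma map_scale {c : ℝ} (hc : 0 < c) :
    Measure.map (fun s => c * s) (volume.restrict ((fun s => c * s) ⁻¹' (Ioc (0:ℝ) 1)))
      = ENNReal.ofReal c⁻¹ • volume.restrict (Ioc (0:ℝ) 1) := by
  rw [← Measure.restrict_map (measurable_const_mul c) measurableSet_Ioc,
    show (fun s => c * s) = (c * ·) from rfl,
    Real.map_volume_mul_left hc.ne', Measure.restrict_smul,
    abs_of_nonneg (inv_nonneg.2 hc.le)]

lemma lint_scale {c : ℝ} (hc : 0 < c) (f : ℝ → ℝ≥0∞)
    (hf : AEMeasurable f (volume.restrict (Ioc (0:ℝ) 1))) :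
    ∫⁻ s in (fun s => c * s) ⁻¹' (Ioc (0:ℝ) 1), f (c * s) =
      ENNReal.ofReal c⁻¹ * ∫⁻ u in Ioc (0:ℝ) 1, f u := by
  have hf' : AEMeasurable f
      (Measure.map (fun s => c * s) (volume.restrict ((fun s => c * s) ⁻¹' (Ioc (0:ℝ) 1)))) := by
    rw [map_scale hc]
    exact (aemeasurable_smul_measure_iff (by simp [hc, inv_pos])).2 hf
  calc ∫⁻ s in (fun s => c * s) ⁻¹' (Ioc (0:ℝ) 1), f (c * s)
      = ∫⁻ u, f u ∂(Measure.map (fun s => c * s)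
          (volume.restrict ((fun s => c * s) ⁻¹' (Ioc (0:ℝ) 1)))) :=
        (lintegral_map' hf' (measurable_const_mul c).aemeasurable).symm
    _ = ENNReal.ofReal c⁻¹ * ∫⁻ u in Ioc (0:ℝ) 1, f u := by
        rw [map_scale hc, lintegral_smul_measure, smul_eq_mul]

lemma lintegral_one_div_Ioo (ha : 0 < a) (hb : b ≤ 1) :
    ∫⁻ s in Ioo a b, ENNReal.ofReal (1/s) ≤ ENNReal.ofReal (Real.log (1/a)) := by
  rcases le_or_gt b a with hba | hab
  · rw [Ioo_eq_empty (not_lt.2 hba)]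
    simp
  · have hcont : IntegrableOn (fun s => 1/s) (Ioo a b) := by
      have h2 : IntegrableOn (fun s => 1/s) (Icc a b) :=
        ContinuousOn.integrableOn_Icc (continuousOn_const.div continuousOn_id
          (fun x hx => ne_of_gt (lt_of_lt_of_le ha hx.1)))
      exact h2.mono_set Ioo_subset_Icc_self
    rw [← ofReal_integral_eq_lintegral_ofReal hcont
      ((ae_restrict_iff' measurableSet_Ioo).2 (Filter.Eventually.of_forall
        (fun s hs => le_of_lt (div_pos one_pos (ha.trans hs.1)))))]
    apply ENNReal.ofReal_le_ofReal
    have h1 : ∫ s in Ioo a b, 1/s = Real.log (b/a) := by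
      rw [← MeasureTheory.integral_Ioc_eq_integral_Ioo,
        ← intervalIntegral.integral_of_le hab.le]
      apply integral_one_div
      intro h
      have h1' := h.1
      have h2' := h.2
      simp only [inf_le_iff, le_sup_iff] at h1'
      rcases h1' with h | h <;> linarith
    rw [h1]
    exact Real.log_le_log (div_pos (ha.trans hab) ha) (by gcongr)

section SSup
variable (hβ : β ∈ Ioo (0:ℝ) 1) (hc₁ : 0 < c₁) (hc₂ : 0 < c₂)
  (hω₀ : ∀ u ∈ Ioc (0:ℝ) 1, 0 ≤ ωt u)
  (hdbl : ∀ a b : ℝ, 0 < a → a ≤ 1 → a / 2 ≤ b → b ≤ a → c₁ * ωt a ≤ ωt b ∧ ωt b ≤ c₂ * ωt a)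
include hβ hc₁ hc₂ hω₀ hdbl

lemma tsum_F_nonneg (ht : t ∈ Ioc (0:ℝ) 1) : 0 ≤ ∑' j, F β ωt t j :=
  tsum_nonneg (F_nonneg hω₀ ht)

lemma bddAbove_S (ht : t ∈ Ioc (0:ℝ) 1) :
    BddAbove {v : ℝ | ∃ s ∈ Set.Icc t 1, v = (t / s) ^ β * ωt s} := by
  refine ⟨(2*c₂*(1+1/c₁)) * ∑' j, F β ωt t j, fun v hv => ?_⟩
  obtain ⟨s, hs, rfl⟩ := hv
  exact elt_bound hβ hc₁ hc₂ hω₀ hdbl ht hs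

lemma self_mem_S (ht : t ∈ Ioc (0:ℝ) 1) :
    ωt t ∈ {v : ℝ | ∃ s ∈ Set.Icc t 1, v = (t / s) ^ β * ωt s} :=
  ⟨t, ⟨le_rfl, ht.2⟩, by rw [div_self ht.1.ne', Real.one_rpow, one_mul]⟩

lemma le_Om (ht : t ∈ Ioc (0:ℝ) 1) : ωt t ≤ Om β ωt t :=
  le_csSup (bddAbove_S hβ hc₁ hc₂ hω₀ hdbl ht) (self_mem_S hβ hc₁ hc₂ hω₀ hdbl ht)

lemma Om_nonneg (ht : t ∈ Ioc (0:ℝ) 1) : 0 ≤ Om β ωt t :=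
  (hω₀ t ht).trans (le_Om hβ hc₁ hc₂ hω₀ hdbl ht)

lemma Om_le_tsum (ht : t ∈ Ioc (0:ℝ) 1) :
    Om β ωt t ≤ (2*c₂*(1+1/c₁)) * ∑' j, F β ωt t j := by
  apply Real.sSup_le
  · rintro v ⟨s, hs, rfl⟩
    exact elt_bound hβ hc₁ hc₂ hω₀ hdbl ht hs
  · exact mul_nonneg (by positivity) (tsum_F_nonneg hβ hc₁ hc₂ hω₀ hdbl ht)

lemma Om_ratio (ha : 0 < a) (hab : a ≤ b) (hb : b ≤ 1) :
    Om β ωt b ≤ (b^β / a^β) * Om β ωt a := by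
  have hb0 : 0 < b := lt_of_lt_of_le ha hab
  have haβ : (0:ℝ) < a^β := Real.rpow_pos_of_pos ha _
  have hbβ : (0:ℝ) < b^β := Real.rpow_pos_of_pos hb0 _
  have hOa := Stmt4Aux.Om_nonneg hβ hc₁ hc₂ hω₀ hdbl ⟨ha, hab.trans hb⟩
  apply Real.sSup_le
  · rintro v ⟨s, hs, rfl⟩
    have hs0 : 0 < s := lt_of_lt_of_le hb0 hs.1
    have hmem : (a/s)^β * ωt s ∈ {v : ℝ | ∃ u ∈ Set.Icc a 1, v = (a / u) ^ β * ωt u} :=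
      ⟨s, ⟨hab.trans hs.1, hs.2⟩, rfl⟩
    have hle : (a/s)^β * ωt s ≤ Om β ωt a :=
      le_csSup (bddAbove_S hβ hc₁ hc₂ hω₀ hdbl ⟨ha, hab.trans hb⟩) hmem
    have hkey : (b/s)^β = (b^β/a^β) * (a/s)^β := by
      rw [Real.div_rpow hb0.le hs0.le, Real.div_rpow ha.le hs0.le]
      field_simp
    rw [hkey, mul_assoc]
    exact mul_le_mul_of_nonneg_left hle (by positivity)
  · positivity

lemma Om_antitone_ratio (ha : 0 < a) (hab : a ≤ b) (hb : b ≤ 1) :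
    Om β ωt b / b^β ≤ Om β ωt a / a^β := by
  have hb0 : 0 < b := lt_of_lt_of_le ha hab
  have haβ : (0:ℝ) < a^β := Real.rpow_pos_of_pos ha _
  have hbβ : (0:ℝ) < b^β := Real.rpow_pos_of_pos hb0 _
  rw [div_le_div_iff₀ hbβ haβ]
  have := Om_ratio hβ hc₁ hc₂ hω₀ hdbl ha hab hb
  calc Om β ωt b * a^β ≤ ((b^β/a^β) * Om β ωt a) * a^β :=
        mul_le_mul_of_nonneg_right this haβ.le
    _ = Om β ωt a * b^β := by field_simp

lemma Om_dbl_lower (ht : 0 < t) (ht1 : t ≤ 1) (hs : t/2 ≤ u) (hst : u ≤ t) :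
    (2:ℝ)^(-β) * Om β ωt t ≤ Om β ωt u := by
  have hu0 : 0 < u := lt_of_lt_of_le (by linarith) hs
  have h := Om_ratio hβ hc₁ hc₂ hω₀ hdbl hu0 hst ht1
  have hOu := Stmt4Aux.Om_nonneg hβ hc₁ hc₂ hω₀ hdbl ⟨hu0, hst.trans ht1⟩
  have hratio : t^β / u^β ≤ (2:ℝ)^β := by
    rw [div_le_iff₀ (Real.rpow_pos_of_pos hu0 _), ← Real.mul_rpow (by norm_num) hu0.le]
    exact Real.rpow_le_rpow ht.le (by linarith) hβ.1.le
  have h2 : Om β ωt t ≤ (2:ℝ)^β * Om β ωt u :=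
    h.trans (mul_le_mul_of_nonneg_right hratio hOu)
  have h2β : (0:ℝ) < (2:ℝ)^β := Real.rpow_pos_of_pos (by norm_num) _
  rw [Real.rpow_neg (by norm_num)]
  rw [inv_mul_le_iff₀ h2β] at *
  linarith [h2]

lemma Om_dbl_upper (ht : 0 < t) (ht1 : t ≤ 1) (hs : t/2 ≤ u) (hst : u ≤ t) :
    Om β ωt u ≤ (1 + c₂) * Om β ωt t := by
  have hu0 : 0 < u := lt_of_lt_of_le (by linarith) hs
  have hOt := Stmt4Aux.Om_nonneg hβ hc₁ hc₂ hω₀ hdbl ⟨ht, ht1⟩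
  apply Real.sSup_le
  · rintro v ⟨s, hsm, rfl⟩
    have hs0 : 0 < s := lt_of_lt_of_le hu0 hsm.1
    by_cases hst' : t ≤ s
    · have hmem : (t/s)^β * ωt s ∈ {v : ℝ | ∃ w ∈ Set.Icc t 1, v = (t / w) ^ β * ωt w} :=
        ⟨s, ⟨hst', hsm.2⟩, rfl⟩
      have hle : (t/s)^β * ωt s ≤ Om β ωt t :=
        le_csSup (bddAbove_S hβ hc₁ hc₂ hω₀ hdbl ⟨ht, ht1⟩) hmem
      have hmono : (u/s)^β ≤ (t/s)^β :=
        Real.rpow_le_rpow (by positivity) (by gcongr) hβ.1.le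
      have : (u/s)^β * ωt s ≤ (t/s)^β * ωt s :=
        mul_le_mul_of_nonneg_right hmono (hω₀ s ⟨hs0, hsm.2⟩)
      nlinarith
    · push_neg at hst'
      have hd : ωt s ≤ c₂ * ωt t := (hdbl t s ht ht1 (by linarith [hsm.1]) hst'.le).2
      have hpow : (u/s)^β ≤ 1 :=
        Real.rpow_le_one (by positivity) (by rw [div_le_one hs0]; exact hsm.1) hβ.1.le
      have hωs : 0 ≤ ωt s := hω₀ s ⟨hs0, hsm.2⟩
      have hωt : 0 ≤ ωt t := hω₀ t ⟨ht, ht1⟩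
      have hOt' : ωt t ≤ Om β ωt t := le_Om hβ hc₁ hc₂ hω₀ hdbl ⟨ht, ht1⟩
      calc (u/s)^β * ωt s ≤ 1 * ωt s := mul_le_mul_of_nonneg_right hpow hωs
        _ = ωt s := one_mul _
        _ ≤ c₂ * ωt t := hd
        _ ≤ c₂ * Om β ωt t := mul_le_mul_of_nonneg_left hOt' hc₂.le
        _ ≤ (1 + c₂) * Om β ωt t := by nlinarith
  · have : (0:ℝ) < 1 + c₂ := by linarith
    positivity

lemma Om_aesm (ht₀ : t₀ ∈ Ioc (0:ℝ) 1) :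
    AEStronglyMeasurable (fun s => Om β ωt s / s) (volume.restrict (Ioo 0 t₀)) := by
  set g : ℝ → ℝ := fun x => Om β ωt (Real.exp (-(max x 0))) / (Real.exp (-(max x 0)))^β with hg
  have hg_mono : Monotone g := by
    intro x y hxy
    have ha : 0 < Real.exp (-(max y 0)) := Real.exp_pos _
    have hab : Real.exp (-(max y 0)) ≤ Real.exp (-(max x 0)) :=
      Real.exp_le_exp.2 (neg_le_neg (max_le_max hxy le_rfl))
    have hb1 : Real.exp (-(max x 0)) ≤ 1 :=
      Real.exp_le_one_iff.2 (neg_nonpos.2 (le_max_right x 0))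
    exact Om_antitone_ratio hβ hc₁ hc₂ hω₀ hdbl ha hab hb1
  have hG : Measurable (fun s : ℝ => s^β * g (-Real.log s) / s) := by
    apply Measurable.div _ measurable_id
    exact ((Real.continuous_rpow_const hβ.1.le).measurable).mul
      (hg_mono.measurable.comp (Real.measurable_log.neg))
  refine hG.aestronglyMeasurable.congr ?_
  refine (ae_restrict_mem measurableSet_Ioo).mono (fun s hs => ?_)
  have hs0 : 0 < s := hs.1
  have hs1 : s ≤ 1 := hs.2.le.trans ht₀.2
  have hls : Real.log s ≤ 0 := Real.log_nonpos hs0.le hs1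
  have hmax : max (-Real.log s) 0 = -Real.log s := max_eq_left (neg_nonneg.2 hls)
  have hβs : (0:ℝ) < s^β := Real.rpow_pos_of_pos hs0 _
  simp only [hg, hmax, neg_neg, Real.exp_log hs0]
  field_simp

lemma Om_integrableOn
    (hint : ∀ t ∈ Ioc (0:ℝ) 1, IntegrableOn (fun s => ωt s / s) (Ioo 0 t))
    (ht₀ : t₀ ∈ Ioc (0:ℝ) 1) :
    IntegrableOn (fun s => Om β ωt s / s) (Ioo 0 t₀) := by
  set C := 2*c₂*(1+1/c₁) with hCdef
  have hC : 0 < C := by positivity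
  set h : ℝ → ℝ := fun u => ωt u / u with hh
  have hI1 : IntegrableOn h (Ioo 0 1) := hint 1 ⟨one_pos, le_rfl⟩
  have hIoc : volume.restrict (Ioo (0:ℝ) 1) = volume.restrict (Ioc (0:ℝ) 1) :=
    Measure.restrict_congr_set Ioo_ae_eq_Ioc
  have hmeash : AEMeasurable h (volume.restrict (Ioc (0:ℝ) 1)) := by
    rw [← hIoc]; exact hI1.1.aemeasurable
  set L : ℝ≥0∞ := ∫⁻ u in Ioc (0:ℝ) 1, ENNReal.ofReal (h u) with hLdef
  have hL : L < ⊤ := by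
    have h2 := hI1.2
    rw [HasFiniteIntegral] at h2
    calc L = ∫⁻ u in Ioo (0:ℝ) 1, ENNReal.ofReal (h u) := by rw [hIoc]
      _ ≤ ∫⁻ u in Ioo (0:ℝ) 1, ‖h u‖₊ := lintegral_mono (fun u => Real.ofReal_le_enorm _)
      _ < ⊤ := h2
  set K : ℕ → ℝ := fun j => C * (2:ℝ)^(-(j:ℝ)*β) with hKdef
  have hK : ∀ j, 0 ≤ K j := fun j => mul_nonneg hC.le (Real.rpow_nonneg (by norm_num) _)
  have hω1 : 0 ≤ ωt 1 := hω₀ 1 ⟨one_pos, le_rfl⟩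
  set P : ℕ → ℝ → ℝ≥0∞ := fun j s => ENNReal.ofReal (C * F β ωt s j / s) with hPdef
  -- ae measurability of each P j
  have hPmeas : ∀ j, AEMeasurable (P j) (volume.restrict (Ioo 0 t₀)) := by
    intro j
    set c : ℝ := (2:ℝ)^j with hcdef
    have hcp : (0:ℝ) < c := by positivity
    set A : Set ℝ := (fun s => c * s) ⁻¹' (Iic 1) with hAdef
    have hA : MeasurableSet A := (measurable_const_mul c) measurableSet_Iic
    set g₁ : ℝ → ℝ≥0∞ := fun s => ENNReal.ofReal (C * ((2:ℝ)^(-(j:ℝ)*β) * ωt (c*s)) / s) with hg₁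
    set g₂ : ℝ → ℝ≥0∞ := fun s => ENNReal.ofReal (C * ((2:ℝ)^(-(j:ℝ)*β) * ωt 1) / s) with hg₂
    have hsplit : P j = fun s => A.indicator g₁ s + Aᶜ.indicator g₂ s := by
      funext s
      by_cases hmem : s ∈ A
      · rw [indicator_of_mem hmem, indicator_of_notMem (by simpa using hmem), add_zero, hg₁]
        have hle : (2:ℝ)^j * s ≤ 1 := hmem
        simp only [hPdef, F, if_pos hle, hcdef]
      · rw [indicator_of_notMem hmem, indicator_of_mem (by simpa using hmem), zero_add, hg₂]
        have hle : ¬ ((2:ℝ)^j * s ≤ 1) := hmem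
        simp only [hPdef, F, if_neg hle]
    rw [hsplit]
    apply AEMeasurable.add
    · rw [aemeasurable_indicator_iff hA]
      set A' : Set ℝ := (fun s => c * s) ⁻¹' (Ioc (0:ℝ) 1) with hA'def
      have hA' : MeasurableSet A' := (measurable_const_mul c) measurableSet_Ioc
      have hsub : A ∩ Ioo 0 t₀ ⊆ A' := by
        rintro s ⟨hsA, hs0, _⟩
        exact ⟨mul_pos hcp hs0, hsA⟩
      have hmono : (volume.restrict (Ioo 0 t₀)).restrict A ≤ volume.restrict A' := by
        rw [Measure.restrict_restrict hA]
        exact Measure.restrict_mono hsub le_rfl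
      refine AEMeasurable.mono_measure ?_ hmono
      -- on A' : g₁ equals const * ofReal∘h∘(c*·)
      have hcomp : AEMeasurable (h ∘ (fun s => c * s)) (volume.restrict A') := by
        refine AEMeasurable.comp_aemeasurable ?_ (measurable_const_mul c).aemeasurable
        rw [hA'def, map_scale hcp]
        exact (aemeasurable_smul_measure_iff (by simp [hcp, inv_pos])).2 hmeash
      have hg₁' : AEMeasurable
          (fun s => ENNReal.ofReal ((C * (2:ℝ)^(-(j:ℝ)*β) * c) * h (c * s)))
          (volume.restrict A') := ((hcomp.const_mul _).ennreal_ofReal)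
      refine hg₁'.congr ?_
      refine (ae_restrict_mem hA').mono (fun s hs => ?_)
      have hcs : 0 < c * s := hs.1
      have hs0 : 0 < s := by by_contra hns; push_neg at hns; nlinarith
      show ENNReal.ofReal ((C * (2:ℝ)^(-(j:ℝ)*β) * c) * h (c * s)) = g₁ s
      simp only [hg₁, hh]
      congr 1
      field_simp
    · rw [aemeasurable_indicator_iff hA.compl]
      exact ((measurable_const.div measurable_id).ennreal_ofReal).aemeasurable
  -- pointwise domination
  have hptwise : ∀ s ∈ Ioo (0:ℝ) t₀,
      ENNReal.ofReal (Om β ωt s / s) ≤ ∑' j, P j s := by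
    intro s hs
    have hs' : s ∈ Ioc (0:ℝ) 1 := ⟨hs.1, hs.2.le.trans ht₀.2⟩
    have hT : Summable (F β ωt s) := summable_F hβ.1 hs'
    have step1 : Om β ωt s / s ≤ (C * ∑' j, F β ωt s j) / s := by
      rw [div_eq_mul_inv, div_eq_mul_inv]
      exact mul_le_mul_of_nonneg_right (Stmt4Aux.Om_le_tsum hβ hc₁ hc₂ hω₀ hdbl hs')
        (inv_nonneg.2 hs.1.le)
    have step2 : (C * ∑' j, F β ωt s j) / s = ∑' j, (C/s) * F β ωt s j := by
      rw [tsum_mul_left]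
      ring
    calc ENNReal.ofReal (Om β ωt s / s)
        ≤ ENNReal.ofReal ((C * ∑' j, F β ωt s j) / s) := ENNReal.ofReal_le_ofReal step1
      _ = ENNReal.ofReal (∑' j, (C/s) * F β ωt s j) := by rw [step2]
      _ = ∑' j, ENNReal.ofReal ((C/s) * F β ωt s j) :=
          ENNReal.ofReal_tsum_of_nonneg
            (fun j => mul_nonneg (div_nonneg hC.le hs.1.le) (F_nonneg hω₀ hs' j))
            (hT.mul_left _)
      _ = ∑' j, P j s := by
          refine tsum_congr (fun j => ?_)
          simp only [hPdef]
          congr 1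
          ring
  -- bound on each term's integral
  have hIj : ∀ j, (∫⁻ s in Ioo 0 t₀, P j s) ≤
      ENNReal.ofReal (K j) * L +
        ENNReal.ofReal (K j * ωt 1) * ENNReal.ofReal ((j:ℝ) * Real.log 2) := by
    intro j
    set c : ℝ := (2:ℝ)^j with hcdef
    have hcp : (0:ℝ) < c := by positivity
    set A : Set ℝ := (fun s => c * s) ⁻¹' (Iic 1) with hAdef
    have hA : MeasurableSet A := (measurable_const_mul c) measurableSet_Iic
    set A' : Set ℝ := (fun s => c * s) ⁻¹' (Ioc (0:ℝ) 1) with hA'def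
    have hA' : MeasurableSet A' := (measurable_const_mul c) measurableSet_Ioc
    rw [← lintegral_inter_add_diff (P j) (Ioo 0 t₀) hA]
    have term1 : (∫⁻ s in Ioo 0 t₀ ∩ A, P j s) ≤ ENNReal.ofReal (K j) * L := by
      have hsub1 : Ioo 0 t₀ ∩ A ⊆ A' := by
        rintro s ⟨⟨hs0, _⟩, hsA⟩
        exact ⟨mul_pos hcp hs0, hsA⟩
      calc (∫⁻ s in Ioo 0 t₀ ∩ A, P j s) ≤ ∫⁻ s in A', P j s := lintegral_mono_set hsub1
        _ = ∫⁻ s in A', ENNReal.ofReal (K j * c) * ENNReal.ofReal (h (c * s)) := by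
            refine setLIntegral_congr_fun hA' (fun s hs => ?_)
            have hcs : 0 < c * s := hs.1
            have hs0 : 0 < s := by by_contra hns; push_neg at hns; nlinarith
            have hle : c * s ≤ 1 := hs.2
            rw [hcdef] at hle
            simp only [hPdef, F, if_pos hle, hh, hKdef, hcdef]
            rw [← ENNReal.ofReal_mul (by positivity)]
            congr 1
            field_simp
        _ = ENNReal.ofReal (K j * c) * ∫⁻ s in A', ENNReal.ofReal (h (c * s)) :=
            lintegral_const_mul' _ _ ENNReal.ofReal_ne_top
        _ = ENNReal.ofReal (K j * c) * (ENNReal.ofReal c⁻¹ * L) := by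
            rw [hA'def, lint_scale hcp _ hmeash.ennreal_ofReal]
        _ = ENNReal.ofReal (K j) * L := by
            rw [← mul_assoc, ← ENNReal.ofReal_mul (mul_nonneg (hK j) hcp.le),
              mul_assoc (K j), mul_inv_cancel₀ hcp.ne', mul_one]
    have term2 : (∫⁻ s in Ioo 0 t₀ \ A, P j s) ≤
        ENNReal.ofReal (K j * ωt 1) * ENNReal.ofReal ((j:ℝ) * Real.log 2) := by
      have hsub2 : Ioo 0 t₀ \ A ⊆ Ioo c⁻¹ t₀ := by
        rintro s ⟨⟨hs0, hst⟩, hsA⟩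
        have h1 : ¬ (c * s ≤ 1) := hsA
        push_neg at h1
        refine ⟨?_, hst⟩
        rw [inv_eq_one_div, div_lt_iff₀ hcp]
        nlinarith
      calc (∫⁻ s in Ioo 0 t₀ \ A, P j s)
          = ∫⁻ s in Ioo 0 t₀ \ A, ENNReal.ofReal (K j * ωt 1) * ENNReal.ofReal (1/s) := by
            refine setLIntegral_congr_fun (measurableSet_Ioo.diff hA)
              (fun s hs => ?_)
            have h1 : ¬ (c * s ≤ 1) := hs.2
            rw [hcdef] at h1
            simp only [hPdef, F, if_neg h1, hKdef, hcdef]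
            rw [← ENNReal.ofReal_mul (by positivity)]
            congr 1
            ring
        _ ≤ ∫⁻ s in Ioo c⁻¹ t₀, ENNReal.ofReal (K j * ωt 1) * ENNReal.ofReal (1/s) :=
            lintegral_mono_set hsub2
        _ = ENNReal.ofReal (K j * ωt 1) * ∫⁻ s in Ioo c⁻¹ t₀, ENNReal.ofReal (1/s) :=
            lintegral_const_mul' _ _ ENNReal.ofReal_ne_top
        _ ≤ ENNReal.ofReal (K j * ωt 1) * ENNReal.ofReal (Real.log (1/c⁻¹)) :=
            mul_le_mul_right (lintegral_one_div_Ioo (inv_pos.2 hcp) ht₀.2) _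
        _ = ENNReal.ofReal (K j * ωt 1) * ENNReal.ofReal ((j:ℝ) * Real.log 2) := by
            rw [one_div, inv_inv, hcdef, Real.log_pow]
    exact add_le_add term1 term2
  -- summable real majorant
  set U : ℕ → ℝ := fun j => K j * L.toReal + K j * ωt 1 * ((j:ℝ) * Real.log 2) with hUdef
  have hlog2 : (0:ℝ) ≤ Real.log 2 := Real.log_nonneg one_le_two
  have hU_nn : ∀ j, 0 ≤ U j := fun j => add_nonneg
    (mul_nonneg (hK j) ENNReal.toReal_nonneg)
    (mul_nonneg (mul_nonneg (hK j) hω1) (mul_nonneg (Nat.cast_nonneg j) hlog2))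
  have hr1 : ‖(2:ℝ)^(-β)‖ < 1 := by
    rw [Real.norm_eq_abs, abs_of_pos (Stmt4Aux.geom_pos β)]
    exact geom_lt_one hβ.1
  have hsumU : Summable U := by
    have h1 : Summable (fun j : ℕ => (C * L.toReal) * ((2:ℝ)^(-β))^j) :=
      (summable_geometric_of_lt_one (Stmt4Aux.geom_pos β).le (geom_lt_one hβ.1)).mul_left _
    have h2 : Summable (fun j : ℕ => (C * ωt 1 * Real.log 2) * ((j:ℝ)^(1:ℕ) * ((2:ℝ)^(-β))^j)) :=
      (summable_pow_mul_geometric_of_norm_lt_one 1 hr1).mul_left _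
    refine (h1.add h2).congr (fun j => ?_)
    simp only [hUdef, hKdef, rpow_geom, pow_one]
    ring
  have hbound_j : ∀ j, ENNReal.ofReal (K j) * L +
      ENNReal.ofReal (K j * ωt 1) * ENNReal.ofReal ((j:ℝ) * Real.log 2) ≤
      ENNReal.ofReal (U j) := by
    intro j
    have e1 : ENNReal.ofReal (K j) * L = ENNReal.ofReal (K j * L.toReal) := by
      rw [ENNReal.ofReal_mul (hK j), ENNReal.ofReal_toReal hL.ne]
    have e2 : ENNReal.ofReal (K j * ωt 1) * ENNReal.ofReal ((j:ℝ) * Real.log 2)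
        = ENNReal.ofReal (K j * ωt 1 * ((j:ℝ) * Real.log 2)) :=
      (ENNReal.ofReal_mul (mul_nonneg (hK j) hω1)).symm
    rw [e1, e2, hUdef, ENNReal.ofReal_add (mul_nonneg (hK j) ENNReal.toReal_nonneg)
      (mul_nonneg (mul_nonneg (hK j) hω1) (mul_nonneg (Nat.cast_nonneg j) hlog2))]
  -- conclusion
  refine ⟨Om_aesm hβ hc₁ hc₂ hω₀ hdbl ht₀, ?_⟩
  rw [hasFiniteIntegral_iff_ofReal ((ae_restrict_mem measurableSet_Ioo).mono
    (fun s hs => div_nonneg (Stmt4Aux.Om_nonneg hβ hc₁ hc₂ hω₀ hdbl ⟨hs.1, hs.2.le.trans ht₀.2⟩) hs.1.le))]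
  calc ∫⁻ s in Ioo 0 t₀, ENNReal.ofReal (Om β ωt s / s)
      ≤ ∫⁻ s in Ioo 0 t₀, ∑' j, P j s :=
        lintegral_mono_ae ((ae_restrict_mem measurableSet_Ioo).mono (fun s hs => hptwise s hs))
    _ = ∑' j, ∫⁻ s in Ioo 0 t₀, P j s := lintegral_tsum hPmeas
    _ ≤ ∑' j, ENNReal.ofReal (U j) :=
        ENNReal.tsum_le_tsum (fun j => (hIj j).trans (hbound_j j))
    _ = ENNReal.ofReal (∑' j, U j) := (ENNReal.ofReal_tsum_of_nonneg hU_nn hsumU).symm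
    _ < ⊤ := ENNReal.ofReal_lt_top

end SSup
end Stmt4Aux

theorem stmt4 (β c₁ c₂ : ℝ) (hβ : β ∈ Set.Ioo (0:ℝ) 1) (hc₁ : 0 < c₁) (hc₂ : 0 < c₂) :
    ∃ C > 0, ∀ (ωt ωs : ℝ → ℝ),
      (∀ t ∈ Set.Ioc (0:ℝ) 1, 0 ≤ ωt t) →
      (∀ t s : ℝ, 0 < t → t ≤ 1 → t / 2 ≤ s → s ≤ t → c₁ * ωt t ≤ ωt s ∧ ωt s ≤ c₂ * ωt t) →
      (∀ t ∈ Set.Ioc (0:ℝ) 1, IntegrableOn (fun s => ωt s / s) (Set.Ioo 0 t)) →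
      (∀ t ∈ Set.Ioc (0:ℝ) 1,
        ωs t = sSup {v : ℝ | ∃ s ∈ Set.Icc t 1, v = (t / s) ^ β * ωt s}) →
      (∀ t ∈ Set.Ioc (0:ℝ) 1,
        ωs t ≤ C * ∑' j : ℕ, (2:ℝ) ^ (-(j:ℝ) * β) *
          (if (2:ℝ) ^ j * t ≤ 1 then ωt ((2:ℝ) ^ j * t) else ωt 1)) ∧
      IsDini ωs := by
  refine ⟨2*c₂*(1+1/c₁), by positivity, ?_⟩
  intro ωt ωs hω₀ hdbl hint hsup
  have hdbl' : ∀ a b : ℝ, 0 < a → a ≤ 1 → a / 2 ≤ b → b ≤ a →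
      c₁ * ωt a ≤ ωt b ∧ ωt b ≤ c₂ * ωt a := hdbl
  have hOm_eq : ∀ t ∈ Set.Ioc (0:ℝ) 1, ωs t = Stmt4Aux.Om β ωt t := fun t ht => hsup t ht
  refine ⟨?_, ?_, ?_, ?_⟩
  · -- bound by the series
    intro t ht
    rw [hOm_eq t ht]
    exact Stmt4Aux.Om_le_tsum hβ hc₁ hc₂ hω₀ hdbl' ht
  · -- nonneg
    intro t ht
    rw [hOm_eq t ht]
    exact Stmt4Aux.Om_nonneg hβ hc₁ hc₂ hω₀ hdbl' ht
  · -- doubling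
    refine ⟨(2:ℝ)^(-β), 1 + c₂, Stmt4Aux.geom_pos β, by linarith, ?_⟩
    intro t s ht0 ht1 hs2 hst
    have hs0 : 0 < s := lt_of_lt_of_le (by linarith) hs2
    have hs1 : s ≤ 1 := hst.trans ht1
    rw [hOm_eq t ⟨ht0, ht1⟩, hOm_eq s ⟨hs0, hs1⟩]
    exact ⟨Stmt4Aux.Om_dbl_lower hβ hc₁ hc₂ hω₀ hdbl' ht0 ht1 hs2 hst,
      Stmt4Aux.Om_dbl_upper hβ hc₁ hc₂ hω₀ hdbl' ht0 ht1 hs2 hst⟩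
  · -- Dini integrability
    intro t ht
    refine (Stmt4Aux.Om_integrableOn hβ hc₁ hc₂ hω₀ hdbl' hint ht).congr ?_
    refine (ae_restrict_mem measurableSet_Ioo).mono (fun s hs => ?_)
    show Stmt4Aux.Om β ωt s / s = ωs s / s
    rw [hOm_eq s ⟨hs.1, hs.2.le.trans ht.2⟩]
end

section
/- Let W ≥ 0 be locally integrable on B(0,10) ⊂ ℝⁿ satisfying the doubling property W(B(x₀,2r)) ≤ D W(B(x₀,r)) whenever B(x₀,2r) ⊂ B(0,10), where W(B) := ∫_B W dx. Suppose in addition that W has the continuity estimate |W(x) − W(y)| ≤ N r^{−n} W(B(x₀,4r)) ( r^{−β}|x−y|^β + ∫₀^{|x−y|} ω̃(t)/t dt ) for all x, y ∈ B(x₀,r), where ω̃ is a Dini function. Then for any x₀ ∈ B(0,1) and 0 < r ≤ 1, sup_{B(x₀,r)} W ≤ C ⨍_{B(x₀,r)} W, where C depends only on n, β, D, N, and ∫₀² ω̃(t)/t dt. -/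
open MeasureTheory Metric Set

theorem stmt10 (n : ℕ) (D N β : ℝ) (hD : 0 < D) (hN : 0 < N) (hβ : 0 < β)
    (ωt : ℝ → ℝ) (hωt_nonneg : ∀ t ∈ Set.Ioc (0:ℝ) 2, 0 ≤ ωt t)
    (hωt_int : IntegrableOn (fun t => ωt t / t) (Set.Ioo (0:ℝ) 2)) :
    ∃ C > 0, ∀ W : EuclideanSpace ℝ (Fin n) → ℝ,
      (∀ x, 0 ≤ W x) →
      LocallyIntegrableOn W (ball (0 : EuclideanSpace ℝ (Fin n)) 10) →
      (∀ (x₀ : EuclideanSpace ℝ (Fin n)) (r : ℝ), 0 < r →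
        ball x₀ (2 * r) ⊆ ball (0 : EuclideanSpace ℝ (Fin n)) 10 →
        (∫ x in ball x₀ (2 * r), W x) ≤ D * ∫ x in ball x₀ r, W x) →
      (∀ (x₀ : EuclideanSpace ℝ (Fin n)) (r : ℝ), 0 < r →
        ball x₀ (4 * r) ⊆ ball (0 : EuclideanSpace ℝ (Fin n)) 10 →
        ∀ x ∈ ball x₀ r, ∀ y ∈ ball x₀ r,
          |W x - W y| ≤ N * r ^ (-(n:ℝ)) * (∫ z in ball x₀ (4 * r), W z) *
            (r ^ (-β) * dist x y ^ β + ∫ t in Set.Ioo 0 (dist x y), ωt t / t)) →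
      ∀ x₀ ∈ ball (0 : EuclideanSpace ℝ (Fin n)) 1, ∀ r ∈ Set.Ioc (0:ℝ) 1,
        ∀ x ∈ ball x₀ r, W x ≤ C * ⨍ z in ball x₀ r, W z := by
  set E := EuclideanSpace ℝ (Fin n)
  set I : ℝ := ∫ t in Set.Ioo (0:ℝ) 2, ωt t / t with hI
  have hInonneg : 0 ≤ I := by
    apply setIntegral_nonneg measurableSet_Ioo
    intro t ht
    exact div_nonneg (hωt_nonneg t ⟨ht.1, ht.2.le⟩) ht.1.le
  set M : ℝ := (2:ℝ) ^ β + I with hM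
  have hMpos : 0 < M := by
    have : (0:ℝ) < (2:ℝ) ^ β := Real.rpow_pos_of_pos (by norm_num) β
    linarith
  set c : ℝ := (volume (ball (0 : E) 1)).toReal with hc
  have hcpos : 0 < c := by
    refine ENNReal.toReal_pos (measure_ball_pos _ _ one_pos).ne' measure_ball_lt_top.ne
  refine ⟨1 + N * D ^ 2 * M * c, by positivity, ?_⟩
  intro W hW0 hloc hdoub hcont x₀ hx₀ r hr x hx
  obtain ⟨hr0, hr1⟩ := hr
  have hx₀1 : dist x₀ (0 : E) < 1 := mem_ball.1 hx₀
  -- inclusions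
  have hsub : ∀ ρ : ℝ, ρ ≤ 8 → ball x₀ ρ ⊆ ball (0 : E) 10 := by
    intro ρ hρ z hz
    have := mem_ball.1 hz
    have : dist z (0 : E) ≤ dist z x₀ + dist x₀ 0 := dist_triangle _ _ _
    simp only [mem_ball] at *
    linarith [mem_ball.1 hz]
  -- integrability on the ball
  have hcb : closedBall x₀ r ⊆ ball (0 : E) 10 := by
    intro z hz
    have h1 : dist z x₀ ≤ r := mem_closedBall.1 hz
    have h2 : dist z (0 : E) ≤ dist z x₀ + dist x₀ 0 := dist_triangle _ _ _
    simp only [mem_ball]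
    linarith
  have hint : IntegrableOn W (ball x₀ r) volume :=
    (hloc.integrableOn_compact_subset hcb (isCompact_closedBall _ _)).mono_set
      ball_subset_closedBall
  -- nonnegativity of integrals
  have hS : ∀ ρ : ℝ, 0 ≤ ∫ z in ball x₀ ρ, W z := fun ρ =>
    setIntegral_nonneg measurableSet_ball fun z _ => hW0 z
  set S1 : ℝ := ∫ z in ball x₀ r, W z
  set S4 : ℝ := ∫ z in ball x₀ (4 * r), W z
  -- key continuity bound
  set K : ℝ := N * r ^ (-(n:ℝ)) * S4 * M with hK
  have hrpow_pos : (0:ℝ) < r ^ (-(n:ℝ)) := Real.rpow_pos_of_pos hr0 _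
  have key : ∀ y ∈ ball x₀ r, W x - K ≤ W y := by
    intro y hy
    have hb := hcont x₀ r hr0 (hsub (4 * r) (by linarith)) x hx y hy
    have hd0 : 0 ≤ dist x y := dist_nonneg
    have hd2r : dist x y < 2 * r := by
      have h1 : dist x x₀ < r := mem_ball.1 hx
      have h2 : dist y x₀ < r := mem_ball.1 hy
      calc dist x y ≤ dist x x₀ + dist x₀ y := dist_triangle _ _ _
        _ < 2 * r := by rw [dist_comm x₀ y]; linarith
    have hd2 : dist x y ≤ 2 := by linarith
    have h1 : r ^ (-β) * dist x y ^ β ≤ (2:ℝ) ^ β := by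
      have : dist x y ^ β ≤ (2 * r) ^ β :=
        Real.rpow_le_rpow hd0 hd2r.le hβ.le
      have h2r : ((2:ℝ) * r) ^ β = 2 ^ β * r ^ β :=
        Real.mul_rpow (by norm_num) hr0.le
      have hrr : r ^ (-β) * r ^ β = 1 := by
        rw [← Real.rpow_add hr0]; simp
      calc r ^ (-β) * dist x y ^ β ≤ r ^ (-β) * ((2:ℝ) * r) ^ β := by
            exact mul_le_mul_of_nonneg_left this (Real.rpow_pos_of_pos hr0 _).le
        _ = 2 ^ β * (r ^ (-β) * r ^ β) := by rw [h2r]; ring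
        _ = 2 ^ β := by rw [hrr, mul_one]
    have h2 : (∫ t in Set.Ioo 0 (dist x y), ωt t / t) ≤ I := by
      apply setIntegral_mono_set hωt_int
      · refine (ae_restrict_iff' measurableSet_Ioo).2 (Filter.Eventually.of_forall ?_)
        intro t ht
        exact div_nonneg (hωt_nonneg t ⟨ht.1, ht.2.le⟩) ht.1.le
      · exact HasSubset.Subset.eventuallyLE (Set.Ioo_subset_Ioo le_rfl hd2)
    have hcoef : 0 ≤ N * r ^ (-(n:ℝ)) * S4 := mul_nonneg (by positivity) (hS _)
    have : |W x - W y| ≤ K := by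
      calc |W x - W y| ≤ N * r ^ (-(n:ℝ)) * S4 *
            (r ^ (-β) * dist x y ^ β + ∫ t in Set.Ioo 0 (dist x y), ωt t / t) := hb
        _ ≤ N * r ^ (-(n:ℝ)) * S4 * M :=
            mul_le_mul_of_nonneg_left (by simp only [hM]; linarith) hcoef
    linarith [(abs_le.1 this).2]
  -- integrate the key bound over the ball
  have hμpos : (0:ℝ) < (volume (ball x₀ r)).toReal :=
    ENNReal.toReal_pos (measure_ball_pos _ _ hr0).ne' measure_ball_lt_top.ne
  set m : ℝ := (volume (ball x₀ r)).toReal with hm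
  have hmono := setIntegral_mono_on
    (integrableOn_const measure_ball_lt_top.ne) hint measurableSet_ball key
  rw [setIntegral_const] at hmono
  -- m = c * r ^ n
  have hmeq : m = r ^ n * c := by
    rw [hm, Measure.addHaar_ball_of_pos volume x₀ hr0, finrank_euclideanSpace,
      Fintype.card_fin, ENNReal.toReal_mul, ENNReal.toReal_ofReal (by positivity)]
  set A : ℝ := ⨍ z in ball x₀ r, W z with hA
  have hAeq : S1 = m * A := by
    rw [hA, setAverage_eq, smul_eq_mul, measureReal_def, ← hm, ← mul_assoc, mul_inv_cancel₀ hμpos.ne', one_mul]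
  have hAnn : 0 ≤ A := by
    rw [hA, setAverage_eq, smul_eq_mul]
    exact mul_nonneg (by positivity) (hS r)
  -- doubling: S4 ≤ D^2 * S1
  have hd1 : S4 ≤ D * ∫ z in ball x₀ (2 * r), W z := by
    have := hdoub x₀ (2 * r) (by linarith) (by
      have h42 : (2 : ℝ) * (2 * r) = 4 * r := by ring
      rw [h42]; exact hsub (4 * r) (by linarith))
    have h42 : (2 : ℝ) * (2 * r) = 4 * r := by ring
    rwa [h42] at this
  have hd2' : (∫ z in ball x₀ (2 * r), W z) ≤ D * S1 :=
    hdoub x₀ r hr0 (hsub (2 * r) (by linarith))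
  have hd4 : S4 ≤ D ^ 2 * S1 := by nlinarith [hS (2 * r)]
  -- r^(-n) * r^n = 1
  have hrn : r ^ (-(n:ℝ)) * r ^ n = 1 := by
    rw [← Real.rpow_natCast r n, ← Real.rpow_add hr0]
    simp
  -- finish
  have hWx : m * (W x - K) ≤ S1 := by
    rw [smul_eq_mul, measureReal_def, ← hm] at hmono; exact hmono
  have hKle : K ≤ N * D ^ 2 * M * c * A := by
    rw [hK]
    have h1 : N * r ^ (-(n:ℝ)) * S4 * M ≤ N * r ^ (-(n:ℝ)) * (D ^ 2 * S1) * M := by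
      have h0 : 0 ≤ N * r ^ (-(n:ℝ)) := by positivity
      exact mul_le_mul_of_nonneg_right (mul_le_mul_of_nonneg_left hd4 h0) hMpos.le
    calc N * r ^ (-(n:ℝ)) * S4 * M ≤ N * r ^ (-(n:ℝ)) * (D ^ 2 * S1) * M := h1
      _ = N * D ^ 2 * M * c * A * (r ^ (-(n:ℝ)) * r ^ n) := by
          rw [hAeq, hmeq]; ring
      _ = N * D ^ 2 * M * c * A := by rw [hrn, mul_one]
  have : W x ≤ A + K := by
    rw [hAeq] at hWx
    nlinarith
  calc W x ≤ A + K := this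
    _ ≤ A + N * D ^ 2 * M * c * A := by linarith
    _ = (1 + N * D ^ 2 * M * c) * A := by ring
end

section
/- Let u ∈ C¹ on closure of B⁺(0,3), and suppose for all x₀ ∈ B⁺(0,3) and 0 < r ≤ 1/4 the inequality ‖Du‖_{L^∞(B(x₀,r)∩B⁺₄)} ≤ 3^{−n} ‖Du‖_{L^∞(B(x₀,6r)∩B⁺₄)} + C r^{−n} ‖Du‖_{L¹(B(x₀,4r)∩B⁺₄)} + C M holds, where M ≥ 0 is a fixed constant. Then ‖Du‖_{L^∞(B⁺(0,2))} ≤ C' ‖Du‖_{L¹(B⁺(0,4))} + C' M, where C' depends only on n and C. -/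
open MeasureTheory Metric Set

/-- The upper half ball `B⁺(0,r) = B(0,r) ∩ {xₙ > 0}` in `ℝ^{n+1}`. -/
def halfBall (n : ℕ) (r : ℝ) : Set (EuclideanSpace ℝ (Fin (n + 1))) :=
  {x | x ∈ ball (0 : EuclideanSpace ℝ (Fin (n + 1))) r ∧ 0 < x (Fin.last n)}


open Filter

lemma halfBall_mono (n : ℕ) {r s : ℝ} (h : r ≤ s) : halfBall n r ⊆ halfBall n s :=
  fun _ hx => ⟨ball_subset_ball h hx.1, hx.2⟩

lemma halfBall_nonempty (n : ℕ) {r : ℝ} (h : 1 < r) : (halfBall n r).Nonempty := by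
  refine ⟨EuclideanSpace.single (Fin.last n) (1:ℝ), ?_, ?_⟩
  · rw [mem_ball, dist_zero_right, EuclideanSpace.norm_single]
    simpa using h
  · simp [EuclideanSpace.single_apply]

theorem stmt11 (n : ℕ) (C : ℝ) (hC : 0 < C) :
    ∃ C' > 0, ∀ (g : EuclideanSpace ℝ (Fin (n + 1)) → EuclideanSpace ℝ (Fin (n + 1))) (M : ℝ),
      0 ≤ M →
      ContinuousOn g (closure (halfBall n 3)) →
      IntegrableOn (fun y => ‖g y‖) (halfBall n 4) →
      (∀ x₀ ∈ halfBall n 3, ∀ r ∈ Set.Ioc (0:ℝ) (1/4), ∀ x ∈ ball x₀ r ∩ halfBall n 4,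
        ‖g x‖ ≤ (3:ℝ) ^ (-((n:ℝ) + 1)) * sSup ((fun y => ‖g y‖) '' (ball x₀ (6 * r) ∩ halfBall n 4)) +
          C * r ^ (-((n:ℝ) + 1)) * (∫ y in ball x₀ (4 * r) ∩ halfBall n 4, ‖g y‖) + C * M) →
      ∀ x ∈ halfBall n 2, ‖g x‖ ≤ C' * (∫ y in halfBall n 4, ‖g y‖) + C' * M := by
  set θ : ℝ := (3:ℝ) ^ (-((n:ℝ) + 1)) with hθdef
  have hθeq : θ = ((3:ℝ) ^ (n+1 : ℕ))⁻¹ := by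
    rw [hθdef, show (-((n:ℝ)+1)) = -((n+1 : ℕ) : ℝ) by push_cast; ring,
      Real.rpow_neg (by norm_num), Real.rpow_natCast]
  have hθpos : 0 < θ := Real.rpow_pos_of_pos (by norm_num) _
  have hθlt : θ < 1 := by
    rw [hθeq]
    rw [inv_lt_one_iff₀]
    right
    exact one_lt_pow₀ (by norm_num) (by omega)
  have hθle : θ ≤ 1/3 := by
    rw [hθeq]
    rw [show (1/3 : ℝ) = ((3:ℝ)^(1:ℕ))⁻¹ by norm_num]
    exact inv_anti₀ (by norm_num) (pow_le_pow_right₀ (by norm_num) (by omega))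
  set C' : ℝ := (3 * 12 ^ (n+1) + 3) * C with hC'def
  have hC'pos : 0 < C' := by positivity
  refine ⟨C', hC'pos, ?_⟩
  intro g M hM hcont hint hhyp x hx
  set I : ℝ := ∫ y in halfBall n 4, ‖g y‖ with hIdef
  have hmeas : MeasurableSet (halfBall n 4) := by
    have : halfBall n 4 = ball (0 : EuclideanSpace ℝ (Fin (n+1))) 4 ∩ {x | 0 < (EuclideanSpace.proj (Fin.last n)) x} := rfl
    rw [this]
    exact measurableSet_ball.inter
      (measurableSet_lt measurable_const (EuclideanSpace.proj (Fin.last n)).continuous.measurable)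
  have hI0 : 0 ≤ I := setIntegral_nonneg hmeas (fun _ _ => norm_nonneg _)
  -- bound on closure of halfBall 3
  obtain ⟨K0, hK0⟩ : ∃ K0, ∀ y ∈ closure (halfBall n 3), ‖g y‖ ≤ K0 := by
    have hcomp : IsCompact (closure (halfBall n 3)) :=
      ((isBounded_ball (x := (0:EuclideanSpace ℝ (Fin (n+1)))) (r := 3)).subset
        (fun _ hx => hx.1)).isCompact_closure
    exact hcomp.exists_bound_of_continuousOn hcont
  set K : ℝ := max K0 0 with hKdef
  have hK : ∀ y ∈ closure (halfBall n 3), ‖g y‖ ≤ K := fun y hy => (hK0 y hy).trans (le_max_left _ _)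
  -- radii
  set ρ : ℕ → ℝ := fun k => 3 - (1/2:ℝ)^k with hρdef
  have hρ2 : ∀ k, 2 ≤ ρ k := by
    intro k
    have : (1/2:ℝ)^k ≤ 1 := pow_le_one₀ (by norm_num) (by norm_num)
    simp only [hρdef]; linarith
  have hρ3 : ∀ k, ρ k < 3 := by
    intro k
    have : (0:ℝ) < (1/2:ℝ)^k := by positivity
    simp only [hρdef]; linarith
  have hsub3 : ∀ k, halfBall n (ρ k) ⊆ closure (halfBall n 3) :=
    fun k => (halfBall_mono n (hρ3 k).le).trans subset_closure
  set A : ℕ → ℝ := fun k => sSup ((fun y => ‖g y‖) '' halfBall n (ρ k)) with hAdef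
  have hne : ∀ k, ((fun y => ‖g y‖) '' halfBall n (ρ k)).Nonempty :=
    fun k => ((halfBall_nonempty n (by linarith [hρ2 k])).image _)
  have hbdd : ∀ k, BddAbove ((fun y => ‖g y‖) '' halfBall n (ρ k)) := by
    intro k
    refine ⟨K, ?_⟩
    rintro _ ⟨y, hy, rfl⟩
    exact hK y (hsub3 k hy)
  have hAK : ∀ k, A k ≤ K := fun k => csSup_le (hne k) (by rintro _ ⟨y, hy, rfl⟩; exact hK y (hsub3 k hy))
  -- the iteration step
  set c : ℕ → ℝ := fun k => C * (12 * 2^k : ℝ)^(n+1) * I + C * M with hcdef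
  have hcspec : ∀ k, c k = C * (12 * 2^k : ℝ)^(n+1) * I + C * M := fun k => by rw [hcdef]
  have hstep : ∀ k, A k ≤ θ * A (k+1) + c k := by
    intro k
    rw [hcspec]
    refine csSup_le (hne k) ?_
    rintro _ ⟨z, hz, rfl⟩
    set r : ℝ := (1/2:ℝ)^k / 12 with hrdef
    have hrpos : 0 < r := by positivity
    have hz3 : z ∈ halfBall n 3 := halfBall_mono n (hρ3 k).le hz
    have hz4 : z ∈ halfBall n 4 := halfBall_mono n (by norm_num) hz3
    have h6r : ρ k + 6 * r = ρ (k+1) := by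
      simp only [hρdef, hrdef, pow_succ]; ring
    have hmain := hhyp z hz3 r ⟨hrpos, by
        rw [hrdef]
        have : (1/2:ℝ)^k ≤ 1 := pow_le_one₀ (by norm_num) (by norm_num)
        linarith⟩ z ⟨mem_ball_self hrpos, hz4⟩
    refine hmain.trans ?_
    have hsSup : sSup ((fun y => ‖g y‖) '' (ball z (6*r) ∩ halfBall n 4)) ≤ A (k+1) := by
      refine csSup_le_csSup (hbdd (k+1)) ⟨‖g z‖, z, ⟨mem_ball_self (by positivity), hz4⟩, rfl⟩ ?_
      refine image_mono ?_
      rintro y ⟨hy1, hy2⟩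
      refine ⟨?_, hy2.2⟩
      have h1 : dist y 0 ≤ dist y z + dist z 0 := dist_triangle _ _ _
      have h2 : dist z 0 < ρ k := mem_ball.mp hz.1
      have h3 : dist y z < 6*r := mem_ball.mp hy1
      refine mem_ball.mpr ?_
      rw [← h6r]
      linarith
    have hInt : (∫ y in ball z (4*r) ∩ halfBall n 4, ‖g y‖) ≤ I := by
      rw [hIdef]
      refine setIntegral_mono_set hint ?_ ?_
      · exact Eventually.of_forall (fun _ => norm_nonneg _)
      · exact HasSubset.Subset.eventuallyLE inter_subset_right
    have hrpow : r ^ (-((n:ℝ)+1)) = (12 * 2^k : ℝ)^(n+1 : ℕ) := by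
      have hre : r = ((12 * 2^k : ℝ))⁻¹ := by
        rw [hrdef]; field_simp; rw [← mul_pow]; norm_num
      rw [hre, show (-((n:ℝ)+1)) = -((n+1 : ℕ) : ℝ) by push_cast; ring,
        Real.rpow_neg (by positivity), Real.inv_rpow (by positivity), inv_inv, Real.rpow_natCast]
    have hterm2 : C * r ^ (-((n:ℝ)+1)) * (∫ y in ball z (4*r) ∩ halfBall n 4, ‖g y‖)
        ≤ C * (12 * 2^k : ℝ)^(n+1) * I := by
      rw [hrpow]
      refine mul_le_mul_of_nonneg_left hInt (by positivity)
    have hterm1 : θ * sSup ((fun y => ‖g y‖) '' (ball z (6*r) ∩ halfBall n 4)) ≤ θ * A (k+1) :=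
      mul_le_mul_of_nonneg_left hsSup hθpos.le
    linarith
  -- iterate
  have hiter : ∀ N, A 0 ≤ θ^N * A N + ∑ k ∈ Finset.range N, θ^k * c k := by
    intro N
    induction N with
    | zero => simp
    | succ N ih =>
      calc A 0 ≤ θ^N * A N + ∑ k ∈ Finset.range N, θ^k * c k := ih
        _ ≤ θ^N * (θ * A (N+1) + c N) + ∑ k ∈ Finset.range N, θ^k * c k := by
            have h := mul_le_mul_of_nonneg_left (hstep N) (pow_pos hθpos N).le
            linarith
        _ = θ^(N+1) * A (N+1) + ∑ k ∈ Finset.range (N+1), θ^k * c k := by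
            rw [Finset.sum_range_succ]; ring
  -- bound the sum
  have hsumbound : ∀ N, ∑ k ∈ Finset.range N, θ^k * c k ≤ C * I * (3 * 12^(n+1)) + C * M * 3 := by
    intro N
    have h1 : ∀ k, θ^k * c k ≤ C * I * (12^(n+1) * (2/3:ℝ)^k) + C * M * (1/3:ℝ)^k := by
      intro k
      have e1 : θ^k * ((12 * 2^k : ℝ)^(n+1)) = 12^(n+1) * ((2/3:ℝ)^(n+1))^k := by
        rw [hθeq, mul_pow]
        rw [div_pow]
        field_simp
        rw [div_pow, div_pow, one_pow, ← pow_mul, ← pow_mul, ← pow_mul, mul_comm k (n+1)]; ring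
      have e2 : ((2/3:ℝ)^(n+1))^k ≤ (2/3:ℝ)^k :=
        pow_le_pow_left₀ (by positivity) (pow_le_of_le_one (by norm_num) (by norm_num) (by omega)) k
      have e3 : θ^k ≤ (1/3:ℝ)^k := pow_le_pow_left₀ hθpos.le hθle k
      have e4 : θ^k * (C * (12 * 2^k : ℝ)^(n+1) * I) ≤ C * I * (12^(n+1) * (2/3:ℝ)^k) := by
        calc θ^k * (C * (12 * 2^k : ℝ)^(n+1) * I) = C * I * (θ^k * (12 * 2^k : ℝ)^(n+1)) := by ring
          _ = C * I * (12^(n+1) * ((2/3:ℝ)^(n+1))^k) := by rw [e1]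
          _ ≤ C * I * (12^(n+1) * (2/3:ℝ)^k) := by
              refine mul_le_mul_of_nonneg_left (mul_le_mul_of_nonneg_left e2 (by positivity)) (by positivity)
      have e5 : θ^k * (C * M) ≤ C * M * (1/3:ℝ)^k := by
        calc θ^k * (C*M) = (C*M) * θ^k := by ring
          _ ≤ (C*M) * (1/3:ℝ)^k := mul_le_mul_of_nonneg_left e3 (by positivity)
      calc θ^k * c k = θ^k * (C * (12 * 2^k : ℝ)^(n+1) * I) + θ^k * (C*M) := by rw [hcspec]; ring
        _ ≤ _ := add_le_add e4 e5
    calc ∑ k ∈ Finset.range N, θ^k * c k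
        ≤ ∑ k ∈ Finset.range N, (C * I * (12^(n+1) * (2/3:ℝ)^k) + C * M * (1/3:ℝ)^k) :=
          Finset.sum_le_sum (fun k _ => h1 k)
      _ = C * I * 12^(n+1) * (∑ k ∈ Finset.range N, (2/3:ℝ)^k)
          + C * M * (∑ k ∈ Finset.range N, (1/3:ℝ)^k) := by
          rw [Finset.mul_sum, Finset.mul_sum, ← Finset.sum_add_distrib]
          congr 1; ext k; ring
      _ ≤ C * I * 12^(n+1) * 3 + C * M * (3/2) := by
          have s1 : (∑ k ∈ Finset.range N, (2/3:ℝ)^k) ≤ 3 := by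
            have h := Summable.sum_le_tsum (Finset.range N) (fun i _ => by positivity)
              (summable_geometric_of_lt_one (by norm_num) (by norm_num : (2/3:ℝ) < 1))
            have ht : (∑' k : ℕ, (2/3:ℝ)^k) = 3 := by
              rw [tsum_geometric_of_lt_one (by norm_num) (by norm_num)]; norm_num
            linarith
          have s2 : (∑ k ∈ Finset.range N, (1/3:ℝ)^k) ≤ 3/2 := by
            have h := Summable.sum_le_tsum (Finset.range N) (fun i _ => by positivity)
              (summable_geometric_of_lt_one (by norm_num) (by norm_num : (1/3:ℝ) < 1))
            have ht : (∑' k : ℕ, (1/3:ℝ)^k) = 3/2 := by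
              rw [tsum_geometric_of_lt_one (by norm_num) (by norm_num)]; norm_num
            linarith
          have := mul_le_mul_of_nonneg_left s1 (show (0:ℝ) ≤ C * I * 12^(n+1) by positivity)
          have := mul_le_mul_of_nonneg_left s2 (show (0:ℝ) ≤ C * M by positivity)
          linarith
      _ ≤ C * I * (3 * 12^(n+1)) + C * M * 3 := by nlinarith
  -- pass to the limit
  set D : ℝ := C * I * (3 * 12^(n+1)) + C * M * 3 with hDdef
  have hlim : A 0 ≤ D := by
    have hub : ∀ N, A 0 ≤ θ^N * K + D := by
      intro N
      have h1 := hiter N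
      have h2 : θ^N * A N ≤ θ^N * K := mul_le_mul_of_nonneg_left (hAK N) (pow_pos hθpos N).le
      have h3 := hsumbound N
      linarith
    have htend : Tendsto (fun N => θ^N * K + D) atTop (nhds (0 * K + D)) :=
      ((tendsto_pow_atTop_nhds_zero_of_lt_one hθpos.le hθlt).mul_const K).add_const D
    have := ge_of_tendsto' htend hub
    simpa using this
  have hfinal : ‖g x‖ ≤ A 0 := by
    refine le_csSup (hbdd 0) ⟨x, ?_, rfl⟩
    have : ρ 0 = 2 := by norm_num [hρdef]
    rw [this]; exact hx
  have hDle : D ≤ C' * I + C' * M := by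
    rw [hDdef, hC'def]
    nlinarith [mul_nonneg hC.le hI0, mul_nonneg hC.le hM,
      mul_nonneg (mul_nonneg (pow_nonneg (show (0:ℝ) ≤ 12 by norm_num) (n+1)) hC.le) hM,
      pow_pos (show (0:ℝ) < 12 by norm_num) (n+1)]
  linarith
end
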